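/- Let S ≥ 1, let v = (v_1,…,v_S) ∈ ℂ^S have pairwise distinct entries, let u_1,…,u_{S+1} ∈ ℂ be pairwise distinct with u_μ ≠ v_ℓ for all μ,ℓ, and let a_0,…,a_S ∈ ℂ. For any S-tuple x set Y(x) := Σ_{p=0}^{S} a_p σ_p(x). Then for all 1 ≤ j, k ≤ S+1: Σ_{ℓ=1}^{S} g(u_j,v_ℓ) · Y(v^{(ℓ→u_j)}) · g(u_k,v_ℓ) · [ (∏_{i≠ℓ} g(v_i,v_ℓ)) / (∏_{μ=1}^{S+1} g(u_μ,v_ℓ)) ] = −δ_{jk} · (∏_{ℓ=1}^{S} g(u_j,v_ℓ)) · Y(v) / (∏_{μ≠j} g(u_j,u_μ)) + Y(û_k), where v^{(ℓ→u_j)} is the S-tuple obtained from v by replacing v_ℓ with u_j, and û_k is the S-tuple (u_1,…,u_{S+1}) with u_k omitted. -/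
import Mathlib


/-- `g c x y = c / (x - y)`. -/
noncomputable def g (c x y : ℂ) : ℂ := c / (x - y)

/-- `esym w p` is the `p`-th elementary symmetric polynomial of the entries of `w`;
it equals `1` for `p = 0` and `0` for `p` larger than the number of entries. -/
noncomputable def esym {m : ℕ} (w : Fin m → ℂ) (p : ℕ) : ℂ :=
  ∑ s ∈ Finset.powersetCard p Finset.univ, ∏ i ∈ s, w i

/-- `Y a w = ∑_{p=0}^{S} a p * σ_p(w)`. -/
noncomputable def Y {S : ℕ} (a : Fin (S + 1) → ℂ) (w : Fin S → ℂ) : ℂ :=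
  ∑ p : Fin (S + 1), a p * esym w (p : ℕ)

open Polynomial Finset

lemma g_ne_zero {c x y : ℂ} (hc : c ≠ 0) (h : x ≠ y) : g c x y ≠ 0 :=
  div_ne_zero hc (sub_ne_zero.2 h)

lemma g_mul_sub {c x y : ℂ} (h : x ≠ y) : g c x y * (x - y) = c :=
  div_mul_cancel₀ _ (sub_ne_zero.2 h)

lemma g_mul_sub' {c x y : ℂ} (h : x ≠ y) : g c x y * (y - x) = -c := by
  have h2 : (y - x) = -(x - y) := by ring
  rw [h2, mul_neg, g_mul_sub h]

noncomputable def Pw {m : ℕ} (w : Fin m → ℂ) : Polynomial ℂ := ∏ i, (X - C (w i))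

noncomputable def L {S : ℕ} (a : Fin (S + 1) → ℂ) (P : Polynomial ℂ) : ℂ :=
  ∑ p : Fin (S + 1), a p * ((-1 : ℂ) ^ (p : ℕ) * P.coeff (S - (p : ℕ)))

lemma coeff_Pw {S : ℕ} (w : Fin S → ℂ) (p : ℕ) (hp : p ≤ S) :
    (Pw w).coeff (S - p) = (-1) ^ p * esym w p := by
  have hcard : Multiset.card (Multiset.map w Finset.univ.val) = S := by simp
  have h := Multiset.prod_X_sub_C_coeff (R := ℂ) (Multiset.map w Finset.univ.val)
      (k := S - p) (by rw [hcard]; omega)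
  rw [Multiset.map_map, hcard] at h
  have h2 : S - (S - p) = p := by omega
  rw [h2] at h
  have hPw : Pw w = (Multiset.map ((fun t => X - C t) ∘ w) Finset.univ.val).prod := rfl
  rw [hPw, h, esym, ← Finset.esymm_map_val]

lemma Y_eq_L {S : ℕ} (a : Fin (S + 1) → ℂ) (w : Fin S → ℂ) : Y a w = L a (Pw w) := by
  unfold Y L
  refine Finset.sum_congr rfl fun p _ => ?_
  rw [coeff_Pw w p (Nat.lt_succ_iff.mp p.isLt), ← mul_assoc ((-1 : ℂ) ^ (p : ℕ)),
    ← pow_add, Even.neg_one_pow ⟨(p : ℕ), rfl⟩, one_mul]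

lemma L_sum {S : ℕ} (a : Fin (S + 1) → ℂ) {ι : Type*} (s : Finset ι) (f : ι → Polynomial ℂ) :
    L a (∑ i ∈ s, f i) = ∑ i ∈ s, L a (f i) := by
  unfold L
  simp only [Polynomial.finset_sum_coeff, Finset.mul_sum]
  exact Finset.sum_comm

lemma L_add {S : ℕ} (a : Fin (S + 1) → ℂ) (P Q : Polynomial ℂ) :
    L a (P + Q) = L a P + L a Q := by
  simp [L, mul_add, Finset.sum_add_distrib]

lemma L_Cmul {S : ℕ} (a : Fin (S + 1) → ℂ) (s : ℂ) (P : Polynomial ℂ) :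
    L a (C s * P) = s * L a P := by
  unfold L
  rw [Finset.mul_sum]
  refine Finset.sum_congr rfl fun p _ => ?_
  rw [coeff_C_mul]; ring

lemma prod_succAbove {S : ℕ} {M : Type*} [CommMonoid M] (f : Fin (S + 1) → M) (k : Fin (S + 1)) :
    ∏ i : Fin S, f (k.succAbove i) = ∏ μ ∈ Finset.univ.erase k, f μ := by
  refine Finset.prod_bij (fun i _ => k.succAbove i) ?_ ?_ ?_ ?_
  · exact fun i _ => Finset.mem_erase.2 ⟨Fin.succAbove_ne k i, Finset.mem_univ _⟩
  · exact fun i _ i' _ h => Fin.succAbove_right_injective h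
  · intro b hb
    obtain ⟨z, hz⟩ := Fin.exists_succAbove_eq (Finset.mem_erase.1 hb).1
    exact ⟨z, Finset.mem_univ _, hz⟩
  · exact fun i _ => rfl

lemma Pw_update {S : ℕ} (v : Fin S → ℂ) (ℓ : Fin S) (x : ℂ) :
    Pw (Function.update v ℓ x) = (X - C x) * ∏ i ∈ Finset.univ.erase ℓ, (X - C (v i)) := by
  unfold Pw
  have h : (fun i => X - C (Function.update v ℓ x i))
      = Function.update (fun i => X - C (v i)) ℓ (X - C x) := by
    funext i
    by_cases h : i = ℓ
    · subst h; simp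
    · simp [Function.update_of_ne h]
  rw [h, Finset.prod_update_of_mem (Finset.mem_univ ℓ), Finset.sdiff_singleton_eq_erase]

/-- the appendix summation identity
`∑_ℓ g(u_j,v_ℓ) Y(v^{(ℓ→u_j)}) g(u_k,v_ℓ) (∏_{i≠ℓ} g(v_i,v_ℓ)) / (∏_μ g(u_μ,v_ℓ))
  = -δ_{jk} (∏_ℓ g(u_j,v_ℓ)) Y(v) / (∏_{μ≠j} g(u_j,u_μ)) + Y(û_k)`. -/
theorem appendix_sum_identity (c : ℂ) (hc : c ≠ 0) (S : ℕ) (hS : 1 ≤ S)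
    (v : Fin S → ℂ) (hv : Function.Injective v)
    (u : Fin (S + 1) → ℂ) (hu : Function.Injective u)
    (huv : ∀ (μ : Fin (S + 1)) (ℓ : Fin S), u μ ≠ v ℓ)
    (a : Fin (S + 1) → ℂ) (j k : Fin (S + 1)) :
    ∑ ℓ : Fin S,
        g c (u j) (v ℓ) * Y a (Function.update v ℓ (u j)) * g c (u k) (v ℓ) *
          ((∏ i ∈ Finset.univ.erase ℓ, g c (v i) (v ℓ)) / (∏ μ, g c (u μ) (v ℓ)))
      = -(if j = k then 1 else 0) *
            ((∏ ℓ, g c (u j) (v ℓ)) * Y a v / (∏ μ ∈ Finset.univ.erase j, g c (u j) (u μ)))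
          + Y a (u ∘ k.succAbove) := by
  classical
  set δ : ℂ := if j = k then 1 else 0 with hδ
  set s : Fin S → ℂ := fun ℓ => g c (u j) (v ℓ) * g c (u k) (v ℓ) *
      ((∏ i ∈ Finset.univ.erase ℓ, g c (v i) (v ℓ)) / (∏ μ, g c (u μ) (v ℓ))) with hs
  set A : ℂ := (∏ ℓ, g c (u j) (v ℓ)) / (∏ μ ∈ Finset.univ.erase j, g c (u j) (u μ)) with hA
  set Q : Fin S → Polynomial ℂ := fun ℓ =>
      (X - C (u j)) * ∏ i ∈ Finset.univ.erase ℓ, (X - C (v i)) with hQ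
  -- the key polynomial identity
  have key : ∑ ℓ : Fin S, C (s ℓ) * Q ℓ = C (-δ * A) * Pw v + Pw (u ∘ k.succAbove) := by
    have hnode : (u j) ∉ Finset.image v Finset.univ := by
      simp only [Finset.mem_image]
      rintro ⟨ℓ, -, e⟩; exact huv j ℓ e.symm
    have hcard : (insert (u j) (Finset.image v Finset.univ)).card = S + 1 := by
      rw [Finset.card_insert_of_notMem hnode, Finset.card_image_of_injective _ hv,
        Finset.card_univ, Fintype.card_fin]
    -- degree facts
    have hQmon : ∀ ℓ : Fin S, (Q ℓ).Monic := fun ℓ =>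
      (monic_X_sub_C _).mul (monic_prod_of_monic _ _ fun i _ => monic_X_sub_C _)
    have hQdeg : ∀ ℓ : Fin S, (Q ℓ).natDegree = S := by
      intro ℓ
      rw [hQ]
      rw [(monic_X_sub_C (u j)).natDegree_mul (monic_prod_of_monic _ _ fun i _ => monic_X_sub_C _),
        natDegree_X_sub_C, Polynomial.natDegree_prod_of_monic _ _ fun i _ => monic_X_sub_C _]
      simp only [natDegree_X_sub_C, Finset.sum_const, smul_eq_mul, mul_one,
        Finset.card_erase_of_mem (Finset.mem_univ ℓ), Finset.card_univ, Fintype.card_fin]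
      omega
    have hPwmon : ∀ (w : Fin S → ℂ), (Pw w).Monic := fun w =>
      monic_prod_of_monic _ _ fun i _ => monic_X_sub_C _
    have hPwdeg : ∀ (w : Fin S → ℂ), (Pw w).natDegree = S := by
      intro w
      rw [Pw, Polynomial.natDegree_prod_of_monic _ _ fun i _ => monic_X_sub_C _]
      simp [natDegree_X_sub_C]
    have hmemQ : ∀ ℓ : Fin S, C (s ℓ) * Q ℓ ∈ Polynomial.degreeLT ℂ (S + 1) := by
      intro ℓ
      rw [← smul_eq_C_mul]
      refine Submodule.smul_mem _ _ ?_
      rw [Polynomial.mem_degreeLT, Polynomial.degree_eq_natDegree (hQmon ℓ).ne_zero, hQdeg ℓ]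
      exact_mod_cast Nat.lt_succ_self S
    have hmemPw : ∀ (w : Fin S → ℂ), Pw w ∈ Polynomial.degreeLT ℂ (S + 1) := by
      intro w
      rw [Polynomial.mem_degreeLT, Polynomial.degree_eq_natDegree (hPwmon w).ne_zero, hPwdeg w]
      exact_mod_cast Nat.lt_succ_self S
    have hmemL : (∑ ℓ : Fin S, C (s ℓ) * Q ℓ) ∈ Polynomial.degreeLT ℂ (S + 1) :=
      Submodule.sum_mem _ fun ℓ _ => hmemQ ℓ
    have hmemR : (C (-δ * A) * Pw v + Pw (u ∘ k.succAbove)) ∈ Polynomial.degreeLT ℂ (S + 1) := by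
      refine Submodule.add_mem _ ?_ (hmemPw _)
      rw [← smul_eq_C_mul]
      exact Submodule.smul_mem _ _ (hmemPw v)
    refine Polynomial.eq_of_degrees_lt_of_eval_finset_eq
      (insert (u j) (Finset.image v Finset.univ)) ?_ ?_ ?_
    · rw [hcard]; exact_mod_cast Polynomial.mem_degreeLT.1 hmemL
    · rw [hcard]; exact_mod_cast Polynomial.mem_degreeLT.1 hmemR
    · intro x hx
      have hPu : Pw (u ∘ k.succAbove) = ∏ μ ∈ Finset.univ.erase k, (X - C (u μ)) := by
        rw [Pw]; exact prod_succAbove (fun μ => X - C (u μ)) k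
      rw [hPu]
      simp only [Polynomial.eval_add, Polynomial.eval_mul, Polynomial.eval_C,
        Polynomial.eval_finset_sum, Polynomial.eval_sub, Polynomial.eval_X,
        Polynomial.eval_prod, hQ, Pw]
      rcases Finset.mem_insert.1 hx with rfl | hx2
      · -- x = u j
        simp only [sub_self, zero_mul, mul_zero, Finset.sum_const_zero]
        by_cases hjk : j = k
        · subst hjk
          rw [hδ, if_pos rfl, hA]
          have h1 : (∏ ℓ, g c (u j) (v ℓ)) * (∏ i, (u j - v i)) = c ^ S := by
            rw [← Finset.prod_mul_distrib,
              Finset.prod_congr rfl fun ℓ _ => g_mul_sub (huv j ℓ)]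
            simp
          have h2 : (∏ μ ∈ Finset.univ.erase j, g c (u j) (u μ)) *
              (∏ μ ∈ Finset.univ.erase j, (u j - u μ)) = c ^ S := by
            rw [← Finset.prod_mul_distrib,
              Finset.prod_congr rfl fun μ hμ =>
                g_mul_sub fun e => (Finset.mem_erase.1 hμ).1 (hu e).symm]
            simp [Finset.card_erase_of_mem]
          have hb : (∏ μ ∈ Finset.univ.erase j, g c (u j) (u μ)) ≠ 0 :=
            Finset.prod_ne_zero_iff.2 fun μ hμ =>
              g_ne_zero hc fun e => (Finset.mem_erase.1 hμ).1 (hu e).symm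
          field_simp
          linear_combination h1 - h2
        · rw [hδ, if_neg hjk]
          rw [Finset.prod_eq_zero (Finset.mem_erase.2 ⟨hjk, Finset.mem_univ j⟩) (sub_self (u j))]
          ring
      · -- x = v ℓ0
        obtain ⟨ℓ0, -, rfl⟩ := Finset.mem_image.1 hx2
        rw [Finset.prod_eq_zero (Finset.mem_univ ℓ0) (sub_self (v ℓ0))]
        have hside : ∀ b ∈ Finset.univ, b ≠ ℓ0 →
            s b * ((v ℓ0 - u j) * ∏ i ∈ Finset.univ.erase b, (v ℓ0 - v i)) = 0 := by
          intro b _ hb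
          rw [Finset.prod_eq_zero (Finset.mem_erase.2 ⟨fun e => hb e.symm, Finset.mem_univ ℓ0⟩)
            (sub_self (v ℓ0))]
          ring
        rw [Finset.sum_eq_single_of_mem ℓ0 (Finset.mem_univ ℓ0) hside]
        -- main term
        ·
          have hAj : g c (u j) (v ℓ0) * (v ℓ0 - u j) = -c := g_mul_sub' (huv j ℓ0)
          have h13 : (∏ i ∈ Finset.univ.erase ℓ0, g c (v i) (v ℓ0)) *
              (∏ i ∈ Finset.univ.erase ℓ0, (v ℓ0 - v i)) = (-c) ^ (S - 1) := by
            rw [← Finset.prod_mul_distrib,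
              Finset.prod_congr rfl fun i hi =>
                g_mul_sub' fun e => (Finset.mem_erase.1 hi).1 (hv e)]
            simp [Finset.card_erase_of_mem]
          have hRQ : (∏ μ ∈ Finset.univ.erase k, (v ℓ0 - u μ)) *
              (∏ μ ∈ Finset.univ.erase k, g c (u μ) (v ℓ0)) = (-c) ^ S := by
            rw [← Finset.prod_mul_distrib,
              Finset.prod_congr rfl fun μ _ => (mul_comm _ _).trans (g_mul_sub' (huv μ ℓ0))]
            simp [Finset.card_erase_of_mem]
          have hP2 : (∏ μ, g c (u μ) (v ℓ0)) =
              g c (u k) (v ℓ0) * ∏ μ ∈ Finset.univ.erase k, g c (u μ) (v ℓ0) :=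
            (Finset.mul_prod_erase _ _ (Finset.mem_univ k)).symm
          have hBk : g c (u k) (v ℓ0) ≠ 0 := g_ne_zero hc (huv k ℓ0)
          have hprodk : (∏ μ ∈ Finset.univ.erase k, g c (u μ) (v ℓ0)) ≠ 0 :=
            Finset.prod_ne_zero_iff.2 fun μ _ => g_ne_zero hc (huv μ ℓ0)
          have hP2ne : (∏ μ, g c (u μ) (v ℓ0)) ≠ 0 :=
            Finset.prod_ne_zero_iff.2 fun μ _ => g_ne_zero hc (huv μ ℓ0)
          have hpow : (-c) * (-c) ^ (S - 1) = (-c) ^ S := by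
            rw [← pow_succ']
            congr 1
            omega
          rw [hs]
          field_simp
          rw [hP2]
          linear_combination (g c (u k) (v ℓ0) * (∏ i ∈ Finset.univ.erase ℓ0, g c (v i) (v ℓ0)) *
              (∏ i ∈ Finset.univ.erase ℓ0, (v ℓ0 - v i))) * hAj
            + (-c * g c (u k) (v ℓ0)) * h13
            + g c (u k) (v ℓ0) * hpow
            + (- g c (u k) (v ℓ0)) * hRQ
  -- conclude
  have h1 : ∀ ℓ : Fin S,
      g c (u j) (v ℓ) * Y a (Function.update v ℓ (u j)) * g c (u k) (v ℓ) *
          ((∏ i ∈ Finset.univ.erase ℓ, g c (v i) (v ℓ)) / (∏ μ, g c (u μ) (v ℓ)))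
        = L a (C (s ℓ) * Q ℓ) := by
    intro ℓ
    rw [L_Cmul, Y_eq_L, Pw_update, hs, hQ]
    ring
  have h2 : (∑ ℓ : Fin S,
      g c (u j) (v ℓ) * Y a (Function.update v ℓ (u j)) * g c (u k) (v ℓ) *
          ((∏ i ∈ Finset.univ.erase ℓ, g c (v i) (v ℓ)) / (∏ μ, g c (u μ) (v ℓ))))
        = ∑ ℓ : Fin S, L a (C (s ℓ) * Q ℓ) :=
    Finset.sum_congr rfl fun ℓ _ => h1 ℓ
  rw [h2, ← L_sum, key, L_add, L_Cmul, ← Y_eq_L a v, ← Y_eq_L a (u ∘ k.succAbove), hA, hδ]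
  ring
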